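/- arXiv:1501.07461 — 4 statements merged into one kernel-verified Lean document; each statement's English description precedes it below -/
import Mathlib

section
/- Let E be a real normed vector space and L : E → ℝ be three times continuously differentiable. Let x, x_h ∈ E, set e = x − x_h, and assume the Fréchet derivative of L vanishes at x, i.e. L'(x) = 0. Then L(x) − L(x_h) = (1/2) L'(x_h)(e) − (1/2) ∫₀¹ s(1−s) · D³L(x_h + s·e)[e,e,e] ds, where D³L denotes the third Fréchet derivative (a trilinear form). -/
/-- Derivative of `s ↦ DⁿL(c + s•e)[e,…,e]` is `Dⁿ⁺¹L(c + s•e)[e,…,e]` for `n < 3`. -/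
lemma dwr_hasDerivAt_iteratedFDeriv_line
    {E : Type*} [NormedAddCommGroup E] [NormedSpace ℝ E]
    (L : E → ℝ) (hL : ContDiff ℝ 3 L) (c e : E) {n : ℕ} (hn : n < 3) (s : ℝ) :
    HasDerivAt (fun t : ℝ => iteratedFDeriv ℝ n L (c + t • e) (fun _ => e))
      (iteratedFDeriv ℝ (n + 1) L (c + s • e) (fun _ => e)) s := by
  have hcurve : HasDerivAt (fun t : ℝ => c + t • e) e s := by
    simpa using ((hasDerivAt_id s).smul_const e).const_add c
  have hF : Differentiable ℝ (iteratedFDeriv ℝ n L) :=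
    hL.differentiable_iteratedFDeriv (by exact_mod_cast hn)
  have h1 : HasDerivAt (fun t : ℝ => iteratedFDeriv ℝ n L (c + t • e))
      (fderiv ℝ (iteratedFDeriv ℝ n L) (c + s • e) e) s :=
    (hF (c + s • e)).hasFDerivAt.comp_hasDerivAt s hcurve
  have h2 := ((ContinuousMultilinearMap.apply ℝ (fun _ : Fin n => E) ℝ
      (fun _ => e)).hasFDerivAt.comp_hasDerivAt s h1)
  exact h2.congr_deriv rfl

/-- Abstract error representation underlying the dual weighted residual method:
if `L : E → ℝ` is `C³` and `L'(x) = 0`, then with `e = x - x_h`,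
`L(x) - L(x_h) = ½ L'(x_h)(e) - ½ ∫₀¹ s(1-s) D³L(x_h + s e)[e,e,e] ds`. -/
theorem dwr_error_representation
    {E : Type*} [NormedAddCommGroup E] [NormedSpace ℝ E]
    (L : E → ℝ) (hL : ContDiff ℝ 3 L) (x x_h : E) (e : E) (he : e = x - x_h)
    (hstat : fderiv ℝ L x = 0) :
    L x - L x_h =
      (1 / 2) * fderiv ℝ L x_h e -
        (1 / 2) * ∫ s in (0:ℝ)..1,
          s * (1 - s) * iteratedFDeriv ℝ 3 L (x_h + s • e) (fun _ => e) := by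
  set g : ℕ → ℝ → ℝ := fun n s => iteratedFDeriv ℝ n L (x_h + s • e) (fun _ => e)
    with hg
  have hd : ∀ (n : ℕ), n < 3 → ∀ s : ℝ, HasDerivAt (g n) (g (n + 1) s) s :=
    fun n hn s => dwr_hasDerivAt_iteratedFDeriv_line L hL x_h e hn s
  have hcont : ∀ (n : ℕ), n ≤ 3 → Continuous (g n) := by
    intro n hn
    exact ((ContinuousMultilinearMap.apply ℝ (fun _ : Fin n => E) ℝ
        (fun _ => e)).continuous.comp
      ((hL.continuous_iteratedFDeriv (by exact_mod_cast hn)).comp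
        (by continuity)))
  -- endpoint values
  have hx : x_h + e = x := by rw [he]; abel
  have hg0_1 : g 0 1 = L x := by simp [hg, hx]
  have hg0_0 : g 0 0 = L x_h := by simp [hg]
  have hg1_1 : g 1 1 = 0 := by simp [hg, hx, iteratedFDeriv_one_apply, hstat]
  have hg1_0 : g 1 0 = fderiv ℝ L x_h e := by simp [hg, iteratedFDeriv_one_apply]
  have hint : ∀ (n : ℕ), n ≤ 3 → IntervalIntegrable (g n) MeasureTheory.volume 0 1 :=
    fun n hn => (hcont n hn).intervalIntegrable 0 1
  -- fundamental theorem of calculus for g 0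
  have hI1 : ∫ s in (0:ℝ)..1, g 1 s = g 0 1 - g 0 0 :=
    intervalIntegral.integral_eq_sub_of_hasDerivAt
      (fun s _ => hd 0 (by norm_num) s) (hint 1 (by norm_num))
  -- first integration by parts
  have hu : ∀ s : ℝ, HasDerivAt (fun s : ℝ => s * (1 - s)) (1 - 2 * s) s := by
    intro s
    have h := (hasDerivAt_id s).mul ((hasDerivAt_const s (1:ℝ)).sub (hasDerivAt_id s))
    exact h.congr_deriv (by simp only [id, Pi.sub_apply]; ring)
  have hibp1 : ∫ s in (0:ℝ)..1, s * (1 - s) * g 3 s =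
      - ∫ s in (0:ℝ)..1, (1 - 2 * s) * g 2 s := by
    rw [intervalIntegral.integral_mul_deriv_eq_deriv_mul
      (fun s _ => hu s) (fun s _ => hd 2 (by norm_num) s)
      ((by fun_prop : Continuous fun s : ℝ => 1 - 2 * s).intervalIntegrable 0 1)
      (hint 3 (by norm_num))]
    ring
  have hu2 : ∀ s : ℝ, HasDerivAt (fun s : ℝ => 1 - 2 * s) (-2 : ℝ) s := by
    intro s
    have h := (hasDerivAt_const s (1:ℝ)).sub ((hasDerivAt_id s).const_mul (2:ℝ))
    exact h.congr_deriv (by norm_num)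
  -- second integration by parts
  have hibp2 : ∫ s in (0:ℝ)..1, (1 - 2 * s) * g 2 s =
      (1 - 2 * 1) * g 1 1 - (1 - 2 * 0) * g 1 0
        - ∫ s in (0:ℝ)..1, (-2 : ℝ) * g 1 s := by
    rw [intervalIntegral.integral_mul_deriv_eq_deriv_mul
      (fun s _ => hu2 s) (fun s _ => hd 1 (by norm_num) s)
      ((continuous_const : Continuous fun _ : ℝ => (-2:ℝ)).intervalIntegrable 0 1)
      (hint 2 (by norm_num))]
  have hI2 : ∫ s in (0:ℝ)..1, (-2 : ℝ) * g 1 s = -2 * (g 0 1 - g 0 0) := by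
    rw [intervalIntegral.integral_const_mul, hI1]
  have key : ∫ s in (0:ℝ)..1, s * (1 - s) * g 3 s =
      g 1 0 - 2 * (g 0 1 - g 0 0) := by
    rw [hibp1, hibp2, hI2, hg1_1]; ring
  rw [← hg0_1, ← hg0_0, ← hg1_0]
  rw [show (∫ s in (0:ℝ)..1,
      s * (1 - s) * iteratedFDeriv ℝ 3 L (x_h + s • e) (fun _ => e)) =
      ∫ s in (0:ℝ)..1, s * (1 - s) * g 3 s from rfl, key]
  ring
end

section
/- Let E be a real normed vector space and L : E → ℝ be three times continuously differentiable. Let x, x_h ∈ E, set e = x − x_h, and assume L'(x) = 0. Then for every x̃ ∈ E satisfying L'(x_h)(x̃ − x_h) = 0 one has L(x) − L(x_h) = (1/2) L'(x_h)(x − x̃) − (1/2) ∫₀¹ s(1−s) · D³L(x_h + s·e)[e,e,e] ds. -/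
/-- DWR error representation with Galerkin orthogonality: if `L : E → ℝ` is `C³`,
`L'(x) = 0`, `e = x - x_h`, and `x̃` satisfies `L'(x_h)(x̃ - x_h) = 0`, then
`L(x) - L(x_h) = ½ L'(x_h)(x - x̃) - ½ ∫₀¹ s(1-s) D³L(x_h + s e)[e,e,e] ds`. -/
theorem dwr_error_representation_galerkin
    {E : Type*} [NormedAddCommGroup E] [NormedSpace ℝ E]
    (L : E → ℝ) (hL : ContDiff ℝ 3 L) (x x_h : E) (e : E) (he : e = x - x_h)
    (hstat : fderiv ℝ L x = 0)
    (x_tilde : E) (hgal : fderiv ℝ L x_h (x_tilde - x_h) = 0) :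
    L x - L x_h =
      (1 / 2) * fderiv ℝ L x_h (x - x_tilde) -
        (1 / 2) * ∫ s in (0:ℝ)..1,
          s * (1 - s) * iteratedFDeriv ℝ 3 L (x_h + s • e) (fun _ => e) := by
  set γ : ℝ → E := fun s => x_h + s • e with hγdef
  have hγ : ∀ s : ℝ, HasDerivAt γ e s := by
    intro s
    simpa [hγdef] using ((hasDerivAt_id s).smul_const e).const_add x_h
  have hγc : Continuous γ := by fun_prop
  set g : ℕ → ℝ → ℝ := fun n s => iteratedFDeriv ℝ n L (γ s) (fun _ => e) with hgdef
  -- derivative structure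
  have hd : ∀ n : ℕ, n < 3 → ∀ s : ℝ, HasDerivAt (g n) (g (n + 1) s) s := by
    intro n hn s
    have hdiff : Differentiable ℝ (iteratedFDeriv ℝ n L) :=
      hL.differentiable_iteratedFDeriv (by exact_mod_cast hn)
    have h1 : HasDerivAt (fun s => iteratedFDeriv ℝ n L (γ s))
        (fderiv ℝ (iteratedFDeriv ℝ n L) (γ s) e) s :=
      (hdiff (γ s)).hasFDerivAt.comp_hasDerivAt s (hγ s)
    have h2 := ((ContinuousMultilinearMap.apply ℝ (fun _ : Fin n => E) ℝ
        (fun _ => e)).hasFDerivAt).comp_hasDerivAt s h1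
    have h3 : fderiv ℝ (iteratedFDeriv ℝ n L) (γ s) e (fun _ : Fin n => e)
        = g (n + 1) s := by
      show _ = iteratedFDeriv ℝ (n + 1) L (γ s) (fun _ => e)
      rw [iteratedFDeriv_succ_apply_left]
      rfl
    have h4 : HasDerivAt (g n) (fderiv ℝ (iteratedFDeriv ℝ n L) (γ s) e (fun _ : Fin n => e)) s := h2
    rw [h3] at h4; exact h4
  have hc : ∀ n : ℕ, n ≤ 3 → Continuous (g n) := by
    intro n hn
    have : Continuous (iteratedFDeriv ℝ n L) :=
      hL.continuous_iteratedFDeriv (by exact_mod_cast hn)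
    exact (ContinuousMultilinearMap.apply ℝ (fun _ : Fin n => E) ℝ
      (fun _ => e)).continuous.comp (this.comp hγc)
  -- fundamental theorem
  have hFTC : ∫ s in (0:ℝ)..1, g 1 s = g 0 1 - g 0 0 :=
    intervalIntegral.integral_eq_sub_of_hasDerivAt (fun s _ => hd 0 (by norm_num) s)
      ((hc 1 (by norm_num)).intervalIntegrable 0 1)
  -- integration by parts, twice
  have hIBP1 : ∫ s in (0:ℝ)..1, s * (1 - s) * g 3 s
      = - ∫ s in (0:ℝ)..1, (1 - 2 * s) * g 2 s := by
    have := intervalIntegral.integral_mul_deriv_eq_deriv_mul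
      (u := fun s : ℝ => s * (1 - s)) (u' := fun s : ℝ => 1 - 2 * s)
      (v := g 2) (v' := g 3)
      (fun s _ => by
        have : HasDerivAt (fun s : ℝ => s * (1 - s)) (1 * (1 - s) + s * (-1)) s :=
          (hasDerivAt_id s).mul ((hasDerivAt_id s).const_sub 1)
        exact this.congr_deriv (by ring))
      (fun s _ => hd 2 (by norm_num) s)
      ((by fun_prop : Continuous fun s : ℝ => 1 - 2 * s).intervalIntegrable 0 1)
      ((hc 3 le_rfl).intervalIntegrable 0 1)
    rw [this]; ring_nf
  have hIBP2 : ∫ s in (0:ℝ)..1, (1 - 2 * s) * g 2 s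
      = - g 1 1 - g 1 0 + 2 * (g 0 1 - g 0 0) := by
    have := intervalIntegral.integral_mul_deriv_eq_deriv_mul
      (u := fun s : ℝ => 1 - 2 * s) (u' := fun _ : ℝ => -2)
      (v := g 1) (v' := g 2)
      (fun s _ => by
        simpa using ((hasDerivAt_id s).const_mul 2).const_sub 1)
      (fun s _ => hd 1 (by norm_num) s)
      ((continuous_const : Continuous fun _ : ℝ => (-2:ℝ)).intervalIntegrable 0 1)
      ((hc 2 (by norm_num)).intervalIntegrable 0 1)
    rw [this]
    have : ∫ s in (0:ℝ)..1, (-2 : ℝ) * g 1 s = -2 * (g 0 1 - g 0 0) := by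
      rw [intervalIntegral.integral_const_mul, hFTC]
    rw [this]; ring
  -- identify values
  have hγ1 : γ 1 = x := by simp [hγdef, he]
  have hγ0 : γ 0 = x_h := by simp [hγdef]
  have hg0_1 : g 0 1 = L x := by simp [hgdef, hγ1]
  have hg0_0 : g 0 0 = L x_h := by simp [hgdef, hγ0]
  have hg1 : ∀ s, g 1 s = fderiv ℝ L (γ s) e := by
    intro s; simp [hgdef, iteratedFDeriv_one_apply]
  have hg1_1 : g 1 1 = 0 := by rw [hg1, hγ1, hstat]; rfl
  have hg1_0 : g 1 0 = fderiv ℝ L x_h (x - x_tilde) := by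
    rw [hg1, hγ0]
    have : x - x_tilde = e - (x_tilde - x_h) := by rw [he]; abel
    rw [this, map_sub, hgal, sub_zero]
  have key : ∫ s in (0:ℝ)..1,
      s * (1 - s) * iteratedFDeriv ℝ 3 L (x_h + s • e) (fun _ => e)
      = g 1 1 + g 1 0 - 2 * (g 0 1 - g 0 0) := by
    have : (∫ s in (0:ℝ)..1,
        s * (1 - s) * iteratedFDeriv ℝ 3 L (x_h + s • e) (fun _ => e))
        = ∫ s in (0:ℝ)..1, s * (1 - s) * g 3 s := rfl
    rw [this, hIBP1, hIBP2]; ring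
  rw [key, hg1_1, hg1_0, ← hg0_1, ← hg0_0]
  ring
end

section
/- Let E be a real normed vector space and L : E → ℝ be three times continuously differentiable. Let x, x_h ∈ E, set e = x − x_h, and assume L'(x) = 0 and L'(x_h)(e) = 0. If M ≥ 0 is such that the operator norm of the third Fréchet derivative satisfies ‖D³L(x_h + s·e)‖ ≤ M for all s ∈ [0,1], then |L(x) − L(x_h)| ≤ (M/12)·‖e‖³. -/
open Set


/-- Third-order error bound between two stationary values: if `L : E → ℝ` is `C³`,
`L'(x) = 0`, `e = x - x_h`, `L'(x_h)(e) = 0`, and `‖D³L(x_h + s e)‖ ≤ M` for all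
`s ∈ [0,1]` with `M ≥ 0`, then `|L(x) - L(x_h)| ≤ (M/12) ‖e‖³`. -/
theorem dwr_error_third_order_bound
    {E : Type*} [NormedAddCommGroup E] [NormedSpace ℝ E]
    (L : E → ℝ) (hL : ContDiff ℝ 3 L) (x x_h : E) (e : E) (he : e = x - x_h)
    (hstat : fderiv ℝ L x = 0) (hstat_h : fderiv ℝ L x_h e = 0)
    (M : ℝ) (hM : 0 ≤ M)
    (hbound : ∀ s ∈ Set.Icc (0:ℝ) 1, ‖iteratedFDeriv ℝ 3 L (x_h + s • e)‖ ≤ M) :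
    |L x - L x_h| ≤ M / 12 * ‖e‖ ^ 3 := by
  -- the affine path
  set f : ℝ → E := fun s => x_h + s • e with hf
  have hf1 : f 1 = x := by simp [hf, he]
  have hf0 : f 0 = x_h := by simp [hf]
  have hfD : ∀ s : ℝ, HasDerivAt f e s := by
    intro s
    have h := ((hasDerivAt_id s).smul_const e).const_add x_h
    rw [one_smul] at h
    exact h
  -- smoothness layers
  have hL1 : Differentiable ℝ L := hL.differentiable (by norm_num)
  have hL2 : ContDiff ℝ 2 (fderiv ℝ L) := hL.fderiv_right (by norm_num)
  have hL2d : Differentiable ℝ (fderiv ℝ L) := hL2.differentiable (by norm_num)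
  have hL3 : ContDiff ℝ 1 (fderiv ℝ (fderiv ℝ L)) := hL2.fderiv_right (by norm_num)
  have hL3d : Differentiable ℝ (fderiv ℝ (fderiv ℝ L)) := hL3.differentiable (by norm_num)
  set Δ : ℝ := L x - L x_h with hΔ
  -- derivative functions along the path
  set g1 : ℝ → ℝ := fun s => fderiv ℝ L (f s) e with hg1
  set g2 : ℝ → ℝ := fun s => fderiv ℝ (fderiv ℝ L) (f s) e e with hg2
  set g3 : ℝ → ℝ := fun s => fderiv ℝ (fderiv ℝ (fderiv ℝ L)) (f s) e e e with hg3
  have hD1 : ∀ s : ℝ, HasDerivAt (fun t => L (f t)) (g1 s) s := fun s =>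
    (hL1 (f s)).hasFDerivAt.comp_hasDerivAt s (hfD s)
  have hD2 : ∀ s : ℝ, HasDerivAt g1 (g2 s) s := by
    intro s
    have h1 : HasDerivAt (fun t => fderiv ℝ L (f t)) (fderiv ℝ (fderiv ℝ L) (f s) e) s :=
      (hL2d (f s)).hasFDerivAt.comp_hasDerivAt s (hfD s)
    simpa using h1.clm_apply (hasDerivAt_const s e)
  have hD3 : ∀ s : ℝ, HasDerivAt g2 (g3 s) s := by
    intro s
    have h1 : HasDerivAt (fun t => fderiv ℝ (fderiv ℝ L) (f t))
        (fderiv ℝ (fderiv ℝ (fderiv ℝ L)) (f s) e) s :=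
      @HasFDerivAt.comp_hasDerivAt ℝ _ E _ _ (E →L[ℝ] E →L[ℝ] ℝ) _ _ f e s (fderiv ℝ (fderiv ℝ L))
        (fderiv ℝ (fderiv ℝ (fderiv ℝ L)) (f s)) (hL3d (f s)).hasFDerivAt (hfD s)
    have h2 := (h1.clm_apply (hasDerivAt_const s e)).clm_apply (hasDerivAt_const s e)
    simpa using h2
  -- bound on g3 via the third iterated derivative
  have hg3bound : ∀ s ∈ Icc (0:ℝ) 1, |g3 s| ≤ M * ‖e‖ ^ 3 := by
    intro s hs
    have heq : iteratedFDeriv ℝ 3 L (f s) (fun _ => e) = g3 s := by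
      rw [show (3:ℕ) = 2 + 1 from rfl, iteratedFDeriv_succ_apply_right,
        iteratedFDeriv_two_apply]
      rfl
    have h1 : |g3 s| ≤ ‖iteratedFDeriv ℝ 3 L (f s)‖ * ‖e‖ ^ 3 := by
      rw [← heq]
      have := (iteratedFDeriv ℝ 3 L (f s)).le_opNorm (fun _ => e)
      simpa [Finset.prod_const] using this
    refine h1.trans ?_
    have := hbound s hs
    have hnn : (0:ℝ) ≤ ‖e‖ ^ 3 := by positivity
    exact mul_le_mul_of_nonneg_right this hnn
  -- Hermite comparison functions
  set φ0 : ℝ → ℝ := fun s => L (f s) - Δ * (s^2 * (3 - 2*s)) with hφ0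
  set φ1 : ℝ → ℝ := fun s => g1 s - Δ * (6*s - 6*s^2) with hφ1
  set φ2 : ℝ → ℝ := fun s => g2 s - Δ * (6 - 12*s) with hφ2
  set φ3 : ℝ → ℝ := fun s => g3 s + 12*Δ with hφ3
  have hφD1 : ∀ s : ℝ, HasDerivAt φ0 (φ1 s) s := by
    intro s
    have hp : HasDerivAt (fun s : ℝ => Δ * (s^2 * (3 - 2*s))) (Δ * (6*s - 6*s^2)) s := by
      have hfun : (fun s : ℝ => Δ * (s^2 * (3 - 2*s))) = fun t => 3*Δ*t^2 - 2*Δ*t^3 := by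
        funext t; ring
      rw [hfun]
      exact (((hasDerivAt_pow 2 s).const_mul (3*Δ)).sub
        ((hasDerivAt_pow 3 s).const_mul (2*Δ))).congr_deriv (by push_cast; ring)
    exact (hD1 s).sub hp
  have hφD2 : ∀ s : ℝ, HasDerivAt φ1 (φ2 s) s := by
    intro s
    have hp : HasDerivAt (fun s : ℝ => Δ * (6*s - 6*s^2)) (Δ * (6 - 12*s)) s := by
      have hfun : (fun s : ℝ => Δ * (6*s - 6*s^2)) = fun t => 6*Δ*t^1 - 6*Δ*t^2 := by
        funext t; ring
      rw [hfun]
      exact (((hasDerivAt_pow 1 s).const_mul (6*Δ)).sub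
        ((hasDerivAt_pow 2 s).const_mul (6*Δ))).congr_deriv (by push_cast; ring)
    exact (hD2 s).sub hp
  have hφD3 : ∀ s : ℝ, HasDerivAt φ2 (φ3 s) s := by
    intro s
    have hp : HasDerivAt (fun s : ℝ => Δ * (6 - 12*s)) (-(12*Δ)) s := by
      have hfun : (fun s : ℝ => Δ * (6 - 12*s)) = fun t => 6*Δ - 12*Δ*t^1 := by
        funext t; ring
      rw [hfun]
      exact (((hasDerivAt_pow 1 s).const_mul (12*Δ)).const_sub (6*Δ)).congr_deriv
        (by push_cast; ring)
    have := (hD3 s).sub hp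
    exact this.congr_deriv (by simp only [hφ3]; ring)
  -- continuity
  have hc0 : ∀ (a b : ℝ), ContinuousOn φ0 (Icc a b) :=
    fun a b => fun s _ => ((hφD1 s).continuousAt).continuousWithinAt
  have hc1 : ∀ (a b : ℝ), ContinuousOn φ1 (Icc a b) :=
    fun a b => fun s _ => ((hφD2 s).continuousAt).continuousWithinAt
  have hc2 : ∀ (a b : ℝ), ContinuousOn φ2 (Icc a b) :=
    fun a b => fun s _ => ((hφD3 s).continuousAt).continuousWithinAt
  -- boundary values
  have hφ0eq : φ0 0 = φ0 1 := by simp [hφ0, hf0, hf1, hΔ]; ring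
  have hφ1_0 : φ1 0 = 0 := by simp [hφ1, hg1, hf0, hstat_h]
  have hφ1_1 : φ1 1 = 0 := by simp [hφ1, hg1, hf1, hstat]
  -- triple Rolle
  obtain ⟨a, ha, hda⟩ := exists_deriv_eq_zero (by norm_num : (0:ℝ) < 1) (hc0 0 1) hφ0eq
  have hφ1a : φ1 a = 0 := by
    rw [← hda]; exact ((hφD1 a).deriv).symm
  obtain ⟨b, hb, hdb⟩ := exists_deriv_eq_zero ha.1 (hc1 0 a) (by rw [hφ1_0, hφ1a])
  obtain ⟨c, hc, hdc⟩ := exists_deriv_eq_zero ha.2 (hc1 a 1) (by rw [hφ1a, hφ1_1])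
  have hφ2b : φ2 b = 0 := by rw [← hdb]; exact ((hφD2 b).deriv).symm
  have hφ2c : φ2 c = 0 := by rw [← hdc]; exact ((hφD2 c).deriv).symm
  have hbc : b < c := lt_trans hb.2 hc.1
  obtain ⟨ξ, hξ, hdξ⟩ := exists_deriv_eq_zero hbc (hc2 b c) (by rw [hφ2b, hφ2c])
  have hφ3ξ : φ3 ξ = 0 := by rw [← hdξ]; exact ((hφD3 ξ).deriv).symm
  have hξI : ξ ∈ Icc (0:ℝ) 1 := ⟨le_of_lt (lt_trans hb.1 hξ.1), le_of_lt (lt_trans hξ.2 hc.2)⟩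
  have h12 : g3 ξ = -(12*Δ) := by
    have := hφ3ξ; simp only [hφ3] at this; linarith
  have := hg3bound ξ hξI
  rw [h12, abs_neg] at this
  have h12Δ : 12 * |Δ| ≤ M * ‖e‖ ^ 3 := by
    rwa [abs_mul, abs_of_nonneg (by norm_num : (0:ℝ) ≤ 12)] at this
  linarith
end

section
/- Let σ and σ' be 2×2 real symmetric matrices with eigenvalues λ1(σ) ≥ λ2(σ) and λ1(σ') ≥ λ2(σ'), let δ > 0, and assume |λ1(σ)| + |λ2(σ)| ≥ δ and |λ1(σ')| + |λ2(σ')| ≥ δ. Define the lamination ratio parameter m[σ] = |λ2(σ)|/(|λ1(σ)|+|λ2(σ)|). Then |m[σ] − m[σ']| ≤ (√2/δ)·‖σ − σ'‖_F. -/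
lemma sqrt_sum_sq_le (u v u' v' : ℝ) : Real.sqrt (u^2 + v^2) ≤
    Real.sqrt (u'^2 + v'^2) + Real.sqrt ((u - u')^2 + (v - v')^2) := by
  have hB : (0:ℝ) ≤ u'^2 + v'^2 := by positivity
  have hC : (0:ℝ) ≤ (u-u')^2 + (v-v')^2 := by positivity
  have hsB := Real.sq_sqrt hB
  have hsC := Real.sq_sqrt hC
  have hnB := Real.sqrt_nonneg (u'^2 + v'^2)
  have hnC := Real.sqrt_nonneg ((u-u')^2 + (v-v')^2)
  have h1 : u^2 + v^2 ≤ (Real.sqrt (u'^2 + v'^2) + Real.sqrt ((u-u')^2 + (v-v')^2))^2 := by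
    nlinarith [sq_nonneg (u'*(v-v') - v'*(u-u')), mul_nonneg hnB hnC,
      sq_nonneg (Real.sqrt (u'^2+v'^2) * Real.sqrt ((u-u')^2+(v-v')^2) - (u'*(u-u') + v'*(v-v')))]
  calc Real.sqrt (u^2 + v^2)
      ≤ Real.sqrt ((Real.sqrt (u'^2 + v'^2) + Real.sqrt ((u-u')^2 + (v-v')^2))^2) :=
        Real.sqrt_le_sqrt h1
    _ = _ := Real.sqrt_sq (by positivity)

lemma sqrt_sub_sqrt_le (p q p' q' : ℝ) :
    |Real.sqrt (p^2 + q^2) - Real.sqrt (p'^2 + q'^2)| ≤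
      Real.sqrt ((p - p')^2 + (q - q')^2) := by
  rw [abs_sub_le_iff]
  refine ⟨by have := sqrt_sum_sq_le p q p' q'; linarith, ?_⟩
  have := sqrt_sum_sq_le p' q' p q
  have e : (p'-p)^2 + (q'-q)^2 = (p-p')^2 + (q-q')^2 := by ring
  rw [e] at this; linarith

lemma ratio_diff_le (a b a' b' δ : ℝ) (ha : 0 ≤ a) (hb : 0 ≤ b)
    (ha' : 0 ≤ a') (hb' : 0 ≤ b') (hδ : 0 < δ)
    (hs : δ ≤ b + a) (hs' : δ ≤ b' + a') :
    |a / (b + a) - a' / (b' + a')| ≤ (|b - b'| + |a - a'|) / δ := by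
  have h0 : (0:ℝ) < b + a := hδ.trans_le hs
  have h0' : (0:ℝ) < b' + a' := hδ.trans_le hs'
  rw [div_sub_div _ _ h0.ne' h0'.ne', abs_div, abs_of_pos (mul_pos h0 h0'),
    div_le_div_iff₀ (mul_pos h0 h0') hδ]
  have hnum : |a * (b' + a') - a' * (b + a)| ≤ (b + a) * (|b - b'| + |a - a'|) := by
    have e : a * (b' + a') - a' * (b + a) = a * (b' - b) + b * (a - a') := by ring
    rw [e]
    calc |a * (b' - b) + b * (a - a')| ≤ |a * (b' - b)| + |b * (a - a')| := abs_add_le _ _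
      _ = a * |b' - b| + b * |a - a'| := by rw [abs_mul, abs_mul, abs_of_nonneg ha, abs_of_nonneg hb]
      _ ≤ (b + a) * (|b - b'| + |a - a'|) := by
          rw [abs_sub_comm b' b]
          nlinarith [abs_nonneg (b - b'), abs_nonneg (a - a')]
  have e0 : a * (b' + a') - (b + a) * a' = a * (b' + a') - a' * (b + a) := by ring
  rw [e0]
  calc |a * (b' + a') - a' * (b + a)| * δ
      ≤ ((b + a) * (|b - b'| + |a - a'|)) * δ := mul_le_mul_of_nonneg_right hnum hδ.le
    _ ≤ ((b + a) * (|b - b'| + |a - a'|)) * (b' + a') :=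
        mul_le_mul_of_nonneg_left hs' (mul_nonneg h0.le (by positivity))
    _ = (|b - b'| + |a - a'|) * ((b + a) * (b' + a')) := by ring

/-- The larger eigenvalue of a 2×2 real symmetric matrix `A` (eigenvalues in
decreasing order). -/
noncomputable def eigMax (A : Matrix (Fin 2) (Fin 2) ℝ) : ℝ :=
  ((A 0 0 + A 1 1) + Real.sqrt ((A 0 0 - A 1 1) ^ 2 + 4 * (A 0 1) ^ 2)) / 2

/-- The smaller eigenvalue of a 2×2 real symmetric matrix `A` (eigenvalues in
decreasing order). -/
noncomputable def eigMin (A : Matrix (Fin 2) (Fin 2) ℝ) : ℝ :=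
  ((A 0 0 + A 1 1) - Real.sqrt ((A 0 0 - A 1 1) ^ 2 + 4 * (A 0 1) ^ 2)) / 2

/-- The Frobenius norm `‖M‖_F = (Σᵢⱼ Mᵢⱼ²)^{1/2}` of a 2×2 real matrix. -/
noncomputable def frobeniusNorm (M : Matrix (Fin 2) (Fin 2) ℝ) : ℝ :=
  Real.sqrt (∑ i, ∑ j, (M i j) ^ 2)

/-- The lamination ratio parameter `m[σ] = |λ₂(σ)| / (|λ₁(σ)| + |λ₂(σ)|)`. -/
noncomputable def ratioParam (σ : Matrix (Fin 2) (Fin 2) ℝ) : ℝ :=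
  |eigMin σ| / (|eigMax σ| + |eigMin σ|)

/-- Lipschitz estimate for the lamination ratio parameter in terms of the stress:
if `|λ₁| + |λ₂| ≥ δ > 0` for both stresses, then
`|m[σ] - m[σ']| ≤ (√2/δ) ‖σ - σ'‖_F`. -/
theorem ratio_parameter_stress_estimate
    (σ σ' : Matrix (Fin 2) (Fin 2) ℝ) (hσ : σ.IsSymm) (hσ' : σ'.IsSymm)
    (δ : ℝ) (hδ : 0 < δ)
    (h : δ ≤ |eigMax σ| + |eigMin σ|) (h' : δ ≤ |eigMax σ'| + |eigMin σ'|) :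
    |ratioParam σ - ratioParam σ'| ≤
      (Real.sqrt 2 / δ) * frobeniusNorm (σ - σ') := by
  -- abbreviations
  set x : ℝ := σ 0 0 - σ' 0 0 with hx
  set y : ℝ := σ 1 1 - σ' 1 1 with hy
  set z : ℝ := σ 0 1 - σ' 0 1 with hz
  -- symmetry gives entry (1,0)
  have hsymm : σ 1 0 - σ' 1 0 = z := by
    have e1 : σ 1 0 = σ 0 1 := by
      have := congrFun (congrFun hσ 0) 1
      simpa [Matrix.transpose_apply] using this
    have e2 : σ' 1 0 = σ' 0 1 := by
      have := congrFun (congrFun hσ' 0) 1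
      simpa [Matrix.transpose_apply] using this
    rw [e1, e2]
  -- Frobenius norm expansion
  have hF : frobeniusNorm (σ - σ') = Real.sqrt (x^2 + y^2 + 2 * z^2) := by
    unfold frobeniusNorm
    congr 1
    rw [Fin.sum_univ_two, Fin.sum_univ_two, Fin.sum_univ_two]
    simp only [Matrix.sub_apply]
    rw [hsymm]
    ring
  set F : ℝ := Real.sqrt (x^2 + y^2 + 2 * z^2) with hFdef
  have hFnn : 0 ≤ F := Real.sqrt_nonneg _
  have hF2 : F^2 = x^2 + y^2 + 2 * z^2 := Real.sq_sqrt (by positivity)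
  -- trace difference bound
  have htb : |x + y| ≤ Real.sqrt 2 * F := by
    have h1 : (x + y)^2 ≤ 2 * (x^2 + y^2 + 2 * z^2) := by nlinarith [sq_nonneg (x - y), sq_nonneg z]
    have := Real.sqrt_le_sqrt h1
    rwa [Real.sqrt_sq_eq_abs, Real.sqrt_mul (by norm_num : (0:ℝ) ≤ 2), ← hFdef] at this
  -- discriminant difference bound
  set r : ℝ := Real.sqrt ((σ 0 0 - σ 1 1)^2 + 4 * (σ 0 1)^2) with hr
  set r' : ℝ := Real.sqrt ((σ' 0 0 - σ' 1 1)^2 + 4 * (σ' 0 1)^2) with hr'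
  have hrb : |r - r'| ≤ Real.sqrt 2 * F := by
    have e : r = Real.sqrt ((σ 0 0 - σ 1 1)^2 + (2 * σ 0 1)^2) := by rw [hr]; ring_nf
    have e' : r' = Real.sqrt ((σ' 0 0 - σ' 1 1)^2 + (2 * σ' 0 1)^2) := by rw [hr']; ring_nf
    rw [e, e']
    refine le_trans (sqrt_sub_sqrt_le _ _ _ _) ?_
    have e2 : ((σ 0 0 - σ 1 1) - (σ' 0 0 - σ' 1 1))^2 + (2 * σ 0 1 - 2 * σ' 0 1)^2
        = (x - y)^2 + 4 * z^2 := by rw [hx, hy, hz]; ring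
    rw [e2]
    have h1 : (x - y)^2 + 4 * z^2 ≤ 2 * (x^2 + y^2 + 2 * z^2) := by nlinarith [sq_nonneg (x + y)]
    calc Real.sqrt ((x - y)^2 + 4 * z^2) ≤ Real.sqrt (2 * (x^2 + y^2 + 2 * z^2)) := Real.sqrt_le_sqrt h1
      _ = Real.sqrt 2 * F := Real.sqrt_mul (by norm_num) _
  -- eigenvalue differences
  have heig : |eigMax σ - eigMax σ'| + |eigMin σ - eigMin σ'| ≤ Real.sqrt 2 * F := by
    have e1 : eigMax σ - eigMax σ' = ((x + y) + (r - r')) / 2 := by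
      unfold eigMax; rw [← hr, ← hr', hx, hy]; ring
    have e2 : eigMin σ - eigMin σ' = ((x + y) - (r - r')) / 2 := by
      unfold eigMin; rw [← hr, ← hr', hx, hy]; ring
    rw [e1, e2]
    rcases abs_cases ((x + y) + (r - r')) with ⟨h1, _⟩ | ⟨h1, _⟩ <;>
      rcases abs_cases ((x + y) - (r - r')) with ⟨h2, _⟩ | ⟨h2, _⟩ <;>
      rcases abs_cases (x + y) with ⟨h3, _⟩ | ⟨h3, _⟩ <;>
      rcases abs_cases (r - r') with ⟨h4, _⟩ | ⟨h4, _⟩ <;>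
      rw [abs_div, abs_div] <;>
      simp only [abs_two] <;>
      rw [h1, h2] <;> linarith
  -- ratio bound
  have hratio : |ratioParam σ - ratioParam σ'| ≤
      (|eigMax σ - eigMax σ'| + |eigMin σ - eigMin σ'|) / δ := by
    unfold ratioParam
    refine le_trans (ratio_diff_le _ _ _ _ δ (abs_nonneg _) (abs_nonneg _)
      (abs_nonneg _) (abs_nonneg _) hδ h h') ?_
    exact (div_le_div_iff_of_pos_right hδ).mpr (add_le_add
      (abs_abs_sub_abs_le_abs_sub _ _) (abs_abs_sub_abs_le_abs_sub _ _))
  rw [hF]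
  calc |ratioParam σ - ratioParam σ'|
      ≤ (|eigMax σ - eigMax σ'| + |eigMin σ - eigMin σ'|) / δ := hratio
    _ ≤ (Real.sqrt 2 * F) / δ := by gcongr
    _ = (Real.sqrt 2 / δ) * F := by ring
end
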